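/- Let X be a nonempty finite set and set ξ⁰ = |X|^{-1/2}·χ_X ∈ l²(X) (the normalized constant function). Let T : l²(X) → l²(X) be a linear map with T ξ⁰ = ξ⁰, and let δ > 0 be such that ‖T η − η‖ ≥ δ·‖η‖ for every η ∈ l²(X) with ⟨ξ⁰, η⟩ = 0. If ξ ∈ l²(X) satisfies ‖ξ‖ = 1, |supp ξ| ≤ m, and ‖T ξ − ξ‖ < ε for some ε with 0 < ε ≤ δ, then m > (1 − ε²/δ²)·|X|. -/

import Mathlib

/-- Let ξ⁰ be the normalized constant function on a nonempty
finite set X, T a linear map fixing ξ⁰ with spectral gap δ on the orthogonal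
complement of ξ⁰. If ‖ξ‖ = 1, |supp ξ| ≤ m and ‖Tξ − ξ‖ < ε ≤ δ, then
m > (1 − ε²/δ²)·|X|. -/
theorem stmt_14 {X : Type*} [Fintype X] [Nonempty X]
    (ξ0 : X → ℂ) (hξ0 : ∀ x, ξ0 x = ((Real.sqrt (Fintype.card X))⁻¹ : ℂ))
    (T : (X → ℂ) →ₗ[ℂ] (X → ℂ)) (hT : T ξ0 = ξ0)
    (δ : ℝ) (hδ : 0 < δ)
    (hgap : ∀ η : X → ℂ, (∑ x, (starRingEnd ℂ) (ξ0 x) * η x) = 0 →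
      δ * Real.sqrt (∑ x, ‖η x‖ ^ 2) ≤
        Real.sqrt (∑ x, ‖(T η) x - η x‖ ^ 2))
    (ξ : X → ℂ) (hnorm : ∑ x, ‖ξ x‖ ^ 2 = 1)
    (m : ℕ) (hsupp : (Function.support ξ).ncard ≤ m)
    (ε : ℝ) (hε0 : 0 < ε) (hεδ : ε ≤ δ)
    (happrox : Real.sqrt (∑ x, ‖(T ξ) x - ξ x‖ ^ 2) < ε) :
    (1 - ε ^ 2 / δ ^ 2) * (Fintype.card X : ℝ) < (m : ℝ) := by
  classical
  set n := Fintype.card X with hn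
  have hn0 : 0 < (n : ℝ) := by exact_mod_cast Fintype.card_pos
  set s : ℝ := (Real.sqrt n)⁻¹ with hs
  have hsqrt : (0:ℝ) < Real.sqrt n := Real.sqrt_pos.2 hn0
  have hs0 : 0 < s := by positivity
  have hs2 : s ^ 2 = (n : ℝ)⁻¹ := by
    rw [hs, inv_pow, Real.sq_sqrt hn0.le]
  have hssq : (n : ℝ) * s ^ 2 = 1 := by
    rw [hs2]; field_simp
  have hξ0' : ∀ x, ξ0 x = ((s : ℝ) : ℂ) := by
    intro x; rw [hξ0 x, hs]; push_cast; ring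
  -- ξ0 has norm 1
  have hξ0norm : ∑ x, (starRingEnd ℂ) (ξ0 x) * ξ0 x = 1 := by
    have h1 : ∀ x, (starRingEnd ℂ) (ξ0 x) * ξ0 x = (((n:ℝ)⁻¹ : ℝ) : ℂ) := by
      intro x
      rw [hξ0' x, Complex.conj_ofReal, ← Complex.ofReal_mul]
      congr 1
      have : s * s = s ^ 2 := by ring
      rw [this]
      field_simp
      nlinarith [hssq]
    rw [Finset.sum_congr rfl fun x _ => h1 x, Finset.sum_const, Finset.card_univ,
      nsmul_eq_mul, ← hn, ← Complex.ofReal_natCast, ← Complex.ofReal_mul]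
    rw [show (n : ℝ) * (n:ℝ)⁻¹ = 1 by field_simp, Complex.ofReal_one]
  set c : ℂ := ∑ x, (starRingEnd ℂ) (ξ0 x) * ξ x with hc
  set η : X → ℂ := ξ - c • ξ0 with hη
  have hηx : ∀ x, η x = ξ x - c * ξ0 x := fun x => rfl
  have horth : (∑ x, (starRingEnd ℂ) (ξ0 x) * η x) = 0 := by
    have h2 : ∀ x, (starRingEnd ℂ) (ξ0 x) * η x
        = (starRingEnd ℂ) (ξ0 x) * ξ x - c * ((starRingEnd ℂ) (ξ0 x) * ξ0 x) := by
      intro x; rw [hηx]; ring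
    rw [Finset.sum_congr rfl fun x _ => h2 x, Finset.sum_sub_distrib, ← Finset.mul_sum,
      hξ0norm, mul_one, ← hc, sub_self]
  -- Tη - η = Tξ - ξ
  have hTη : ∀ x, (T η) x - η x = (T ξ) x - ξ x := by
    intro x
    rw [hη]
    simp only [map_sub, map_smul, hT, Pi.sub_apply, Pi.smul_apply, smul_eq_mul]
    ring
  -- gap bound: ∑ |η|² < ε²/δ²
  have hA0 : (0:ℝ) ≤ ∑ x, ‖η x‖ ^ 2 := by positivity
  have hgapη := hgap η horth
  have hsums : (∑ x, ‖(T η) x - η x‖ ^ 2)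
      = ∑ x, ‖(T ξ) x - ξ x‖ ^ 2 :=
    Finset.sum_congr rfl fun x _ => by rw [hTη]
  rw [hsums] at hgapη
  have hδa : δ * Real.sqrt (∑ x, ‖η x‖ ^ 2) < ε := lt_of_le_of_lt hgapη happrox
  have hAlt : (∑ x, ‖η x‖ ^ 2) < ε ^ 2 / δ ^ 2 := by
    have h1 : Real.sqrt (∑ x, ‖η x‖ ^ 2) < ε / δ := by
      rw [lt_div_iff₀ hδ, mul_comm]; exact hδa
    have h2 := mul_self_lt_mul_self (Real.sqrt_nonneg _) h1
    rw [Real.mul_self_sqrt hA0] at h2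
    calc (∑ x, ‖η x‖ ^ 2) < (ε / δ) * (ε / δ) := h2
      _ = ε ^ 2 / δ ^ 2 := by ring
  -- Pythagoras: 1 = normSq c + ∑ normSq η
  have hξeq : ∀ x, ξ x = c * ξ0 x + η x := by intro x; rw [hηx]; ring
  have hcross : ∑ x, (c * ξ0 x * (starRingEnd ℂ) (η x)) = 0 := by
    have h3 : ∑ x, (c * ξ0 x * (starRingEnd ℂ) (η x))
        = c * (starRingEnd ℂ) (∑ x, (starRingEnd ℂ) (ξ0 x) * η x) := by
      rw [map_sum, Finset.mul_sum]
      refine Finset.sum_congr rfl fun x _ => ?_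
      rw [map_mul, Complex.conj_conj]
      ring
    rw [h3, horth, map_zero, mul_zero]
  have hpyth : Complex.normSq c + ∑ x, ‖η x‖ ^ 2 = 1 := by
    have he : ∀ x, ‖ξ x‖ ^ 2
        = Complex.normSq c * Complex.normSq (ξ0 x) + ‖η x‖ ^ 2
          + 2 * (c * ξ0 x * (starRingEnd ℂ) (η x)).re := by
      intro x
      rw [Complex.sq_norm, Complex.sq_norm, hξeq x, Complex.normSq_add, Complex.normSq_mul]
    have hsum := hnorm
    rw [Finset.sum_congr rfl fun x _ => he x] at hsum
    rw [Finset.sum_add_distrib, Finset.sum_add_distrib, ← Finset.mul_sum] at hsum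
    have hns : ∑ x, Complex.normSq (ξ0 x) = 1 := by
      have h4 : ∀ x, Complex.normSq (ξ0 x) = s * s := by
        intro x; rw [hξ0' x, Complex.normSq_ofReal]
      rw [Finset.sum_congr rfl fun x _ => h4 x, Finset.sum_const, Finset.card_univ,
        nsmul_eq_mul, ← hn]
      nlinarith [hssq]
    have hre : ∑ x, (2 : ℝ) * (c * ξ0 x * (starRingEnd ℂ) (η x)).re = 0 := by
      rw [← Finset.mul_sum, ← Complex.re_sum, hcross, Complex.zero_re, mul_zero]
    rw [hns, mul_one, hre, add_zero] at hsum
    exact hsum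
  -- bound normSq c ≤ m / n via Cauchy-Schwarz on the support
  set F : Finset X := (Function.support ξ).toFinset with hF
  have hFcard : (F.card : ℝ) ≤ (m : ℝ) := by
    have h5 := Set.ncard_eq_toFinset_card' (Function.support ξ)
    rw [h5] at hsupp
    exact_mod_cast hsupp
  have hcs : (∑ x ∈ F, ‖ξ x‖) ^ 2 ≤ (F.card : ℝ) * 1 := by
    have h := Finset.sum_mul_sq_le_sq_mul_sq F (fun _ => (1:ℝ)) (fun x => ‖ξ x‖)
    simp only [one_mul, one_pow, Finset.sum_const, nsmul_eq_mul, mul_one] at h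
    have hsub : ∑ x ∈ F, ‖ξ x‖ ^ 2 = ∑ x, ‖ξ x‖ ^ 2 := by
      refine Finset.sum_subset (Finset.subset_univ F) fun x _ hx => ?_
      have hx0 : ξ x = 0 := by
        by_contra h0
        exact hx (by simp [hF, Function.mem_support, h0])
      simp [hx0]
    rw [hsub, hnorm, mul_one] at h
    calc (∑ x ∈ F, ‖ξ x‖) ^ 2 ≤ (F.card : ℝ) := h
      _ = (F.card : ℝ) * 1 := (mul_one _).symm
  have hcabs : ‖c‖ ≤ s * ∑ x ∈ F, ‖ξ x‖ := by
    have hceq : c = ∑ x ∈ F, (starRingEnd ℂ) (ξ0 x) * ξ x := by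
      rw [hc]
      refine (Finset.sum_subset (Finset.subset_univ F) fun x _ hx => ?_).symm
      have hx0 : ξ x = 0 := by
        by_contra h0
        exact hx (by simp [hF, Function.mem_support, h0])
      simp [hx0]
    rw [hceq]
    calc ‖∑ x ∈ F, (starRingEnd ℂ) (ξ0 x) * ξ x‖
        ≤ ∑ x ∈ F, ‖(starRingEnd ℂ) (ξ0 x) * ξ x‖ :=
          norm_sum_le _ _
      _ = ∑ x ∈ F, s * ‖ξ x‖ := by
          refine Finset.sum_congr rfl fun x _ => ?_
          rw [norm_mul, Complex.norm_conj, hξ0' x, Complex.norm_real, Real.norm_of_nonneg hs0.le]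
      _ = s * ∑ x ∈ F, ‖ξ x‖ := by rw [Finset.mul_sum]
  have hcsq : Complex.normSq c ≤ (m : ℝ) / (n : ℝ) := by
    rw [← Complex.sq_norm]
    have h1 : ‖c‖ ^ 2 ≤ s ^ 2 * (∑ x ∈ F, ‖ξ x‖) ^ 2 := by
      have h6 := pow_le_pow_left₀ (norm_nonneg c) hcabs 2
      calc ‖c‖ ^ 2 ≤ (s * ∑ x ∈ F, ‖ξ x‖) ^ 2 := h6
        _ = s ^ 2 * (∑ x ∈ F, ‖ξ x‖) ^ 2 := by ring
    have h2 : s ^ 2 * (∑ x ∈ F, ‖ξ x‖) ^ 2 ≤ s ^ 2 * ((m : ℝ)) := by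
      apply mul_le_mul_of_nonneg_left _ (by positivity)
      calc (∑ x ∈ F, ‖ξ x‖) ^ 2 ≤ (F.card : ℝ) * 1 := hcs
        _ ≤ (m : ℝ) := by rw [mul_one]; exact hFcard
    have h3 : s ^ 2 * (m : ℝ) = (m : ℝ) / (n : ℝ) := by
      rw [hs2, inv_mul_eq_div]
    linarith
  -- finish
  have hfinal : 1 - ε ^ 2 / δ ^ 2 < (m : ℝ) / (n : ℝ) := by linarith
  calc (1 - ε ^ 2 / δ ^ 2) * (n : ℝ) < ((m : ℝ) / (n : ℝ)) * (n : ℝ) :=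
        mul_lt_mul_of_pos_right hfinal hn0
    _ = (m : ℝ) := div_mul_cancel₀ _ (ne_of_gt hn0)
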